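/- Every nontrivial element of the group Γ = ⟨α,β,γ⟩ ≅ (ℤ/2)³ other than α, β, γ themselves (i.e. αβ, αγ, βγ, αβγ) acts freely on 𝕋⁷. -/
import Mathlib


/-- The circle `ℝ/ℤ`. -/
abbrev Circ := AddCircle (1 : ℝ)

/-- The 7-torus `𝕋⁷ = ℝ⁷/ℤ⁷`. -/
abbrev T7 := Fin 7 → Circ

noncomputable def half : Circ := ((1/2 : ℝ) : Circ)

/-- The involution `α(x) = (x₁,x₂,x₃,-x₄,-x₅,-x₆,-x₇)`. -/
noncomputable def tα (x : T7) : T7 := ![x 0, x 1, x 2, -x 3, -x 4, -x 5, -x 6]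

/-- The involution `β(x) = (x₁,-x₂,-x₃,x₄,x₅,-x₆+1/2,-x₇)`. -/
noncomputable def tβ (x : T7) : T7 := ![x 0, -x 1, -x 2, x 3, x 4, -x 5 + half, -x 6]

/-- The involution `γ(x) = (-x₁,x₂,-x₃,x₄,-x₅+1/2,x₆,-x₇+1/2)`. -/
noncomputable def tγ (x : T7) : T7 := ![-x 0, x 1, -x 2, x 3, -x 4 + half, x 5, -x 6 + half]

lemma half_ne_zero : half ≠ 0 := by
  intro h
  rw [half, AddCircle.coe_eq_zero_iff] at h
  obtain ⟨n, hn⟩ := h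
  have : (n : ℝ) = 1/2 := by simpa using hn
  have h2 : (2 : ℝ) * n = 1 := by rw [this]; ring
  have : (2 * n : ℤ) = 1 := by exact_mod_cast h2
  omega

lemma key {a : Circ} (h : -(-a + half) = a) : False := by
  rw [neg_add_rev, neg_neg] at h
  nth_rewrite 2 [show a = 0 + a by rw [zero_add]] at h
  exact half_ne_zero (neg_eq_zero.mp (add_right_cancel h))

/-- Every nontrivial element of `Γ = ⟨α,β,γ⟩ ≅ (ℤ/2)³` other than `α, β, γ`
themselves, i.e. `αβ`, `αγ`, `βγ` and `αβγ`, acts freely on `𝕋⁷`. -/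
theorem composites_act_freely :
    (∀ x : T7, tα (tβ x) ≠ x) ∧
    (∀ x : T7, tα (tγ x) ≠ x) ∧
    (∀ x : T7, tβ (tγ x) ≠ x) ∧
    (∀ x : T7, tα (tβ (tγ x)) ≠ x) := by
  refine ⟨fun x h => key (a := x 5) (congrFun h 5),
          fun x h => key (a := x 4) (congrFun h 4),
          fun x h => key (a := x 6) (congrFun h 6),
          fun x h => key (a := x 5) (congrFun h 5)⟩
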